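/- Let q, t be real numbers with 0 < q < 1 and t > 0, and let z : ℤ → ℝ be a family with ∑_{i∈ℤ} |z_i| < ∞ and q^2·max(t, t^{−1})·|z_i| < 1 for every i ∈ ℤ. Then the family of positive reals ((((1 + q^{2m}·t·z_i)(1 − q^{2m}·t^{−1}·z_i))/((1 − q^{2m}·t·z_i)(1 + q^{2m}·t^{−1}·z_i)))^m) indexed by pairs (m, i) ∈ ℕ₊ × ℤ is multipliable, and its product equals exp(∑_{k odd, k≥1} (2/k)·((t^k − t^{−k})/(q^k − q^{−k})^2)·(∑_{i∈ℤ} z_i^k)). -/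

import Mathlib

open Real Filter

/-- Power series for `log ((1+a)(1-b)/((1-a)(1+b)))`. -/
lemma aux_log4 {a b : ℝ} (ha : |a| < 1) (hb : |b| < 1) :
    HasSum (fun n : ℕ => (2 : ℝ) * (1 / (2 * n + 1)) * (a ^ (2 * n + 1) - b ^ (2 * n + 1)))
      (Real.log (((1 + a) * (1 - b)) / ((1 - a) * (1 + b)))) := by
  obtain ⟨ha1, ha2⟩ := abs_lt.mp ha
  obtain ⟨hb1, hb2⟩ := abs_lt.mp hb
  have h := (Real.hasSum_log_sub_log_of_abs_lt_one ha).sub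
    (Real.hasSum_log_sub_log_of_abs_lt_one hb)
  have hlog : Real.log (((1 + a) * (1 - b)) / ((1 - a) * (1 + b))) =
      (Real.log (1 + a) - Real.log (1 - a)) - (Real.log (1 + b) - Real.log (1 - b)) := by
    rw [Real.log_div (by nlinarith) (by nlinarith),
      Real.log_mul (by nlinarith) (by nlinarith),
      Real.log_mul (by nlinarith) (by nlinarith)]
    ring
  rw [hlog]
  refine h.congr_fun fun n => ?_
  ring

/-- `∑_{m ∈ ℕ+} m x^m = x/(1-x)^2` for `|x| < 1`. -/
lemma aux_pnat_geom {x : ℝ} (hx : |x| < 1) :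
    HasSum (fun m : ℕ+ => ((m : ℕ) : ℝ) * x ^ (m : ℕ)) (x / (1 - x) ^ 2) := by
  have h : HasSum (fun n : ℕ => (n : ℝ) * x ^ n) (x / (1 - x) ^ 2) :=
    hasSum_coe_mul_geometric_of_norm_lt_one (by rwa [Real.norm_eq_abs])
  have hinj : Function.Injective (fun m : ℕ+ => (m : ℕ)) := fun a b hab => PNat.coe_injective hab
  have hzero : ∀ n : ℕ, n ∉ Set.range (fun m : ℕ+ => (m : ℕ)) → (n : ℝ) * x ^ n = 0 := by
    intro n hn
    have : n = 0 := by
      by_contra h0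
      exact hn ⟨⟨n, Nat.pos_of_ne_zero h0⟩, rfl⟩
    simp [this]
  exact (hinj.hasSum_iff hzero).mpr h

/-- The equivalence `ℕ ≃ {k : ℕ // Odd k}`, `n ↦ 2n+1`. -/
def oddEquiv : ℕ ≃ {k : ℕ // Odd k} where
  toFun n := ⟨2 * n + 1, ⟨n, by ring⟩⟩
  invFun k := ((k : ℕ) - 1) / 2
  left_inv n := by
    show (2 * n + 1 - 1) / 2 = n
    omega
  right_inv k := by
    obtain ⟨k, m, rfl⟩ := k
    ext
    show 2 * ((2 * m + 1 - 1) / 2) + 1 = 2 * m + 1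
    omega

set_option maxHeartbeats 1000000 in
/-- The infinite product formula for the orthogonal Chern–Simons partition function of
the unknot: for `0 < q < 1`, `t > 0`, and a summable family `z : ℤ → ℝ` with
`q^2 * max(t, t⁻¹) * |z_i| < 1` for all `i`, the family
`(((1+q^(2m) t z_i)(1-q^(2m) t⁻¹ z_i))/((1-q^(2m) t z_i)(1+q^(2m) t⁻¹ z_i)))^m`
indexed by `(m, i) ∈ ℕ₊ × ℤ` is multipliable and its product equals
`exp (∑_{k odd} (2/k) ((t^k - t^{-k})/(q^k - q^{-k})^2) (∑_i z_i^k))`. -/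
theorem unknot_infinite_product_formula (q t : ℝ) (hq0 : 0 < q) (hq1 : q < 1)
    (ht : 0 < t) (z : ℤ → ℝ) (hz : Summable fun i : ℤ => |z i|)
    (hzq : ∀ i : ℤ, q ^ 2 * max t t⁻¹ * |z i| < 1) :
    Multipliable (fun p : ℕ+ × ℤ =>
      (((1 + q ^ (2 * (p.1 : ℕ)) * t * z p.2) * (1 - q ^ (2 * (p.1 : ℕ)) * t⁻¹ * z p.2)) /
        ((1 - q ^ (2 * (p.1 : ℕ)) * t * z p.2) * (1 + q ^ (2 * (p.1 : ℕ)) * t⁻¹ * z p.2)))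
        ^ (p.1 : ℕ)) ∧
    ∏' p : ℕ+ × ℤ,
        (((1 + q ^ (2 * (p.1 : ℕ)) * t * z p.2) * (1 - q ^ (2 * (p.1 : ℕ)) * t⁻¹ * z p.2)) /
          ((1 - q ^ (2 * (p.1 : ℕ)) * t * z p.2) * (1 + q ^ (2 * (p.1 : ℕ)) * t⁻¹ * z p.2)))
          ^ (p.1 : ℕ) =
      Real.exp (∑' k : {k : ℕ // Odd k},
        (2 / ((k : ℕ) : ℝ)) *
          ((t ^ (k : ℕ) - t⁻¹ ^ (k : ℕ)) / (q ^ (k : ℕ) - q⁻¹ ^ (k : ℕ)) ^ 2) *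
          (∑' i : ℤ, z i ^ (k : ℕ))) := by
  classical
  set M : ℝ := max t t⁻¹ with hMdef
  have hM0 : 0 < M := lt_of_lt_of_le ht (le_max_left _ _)
  have htM : t ≤ M := le_max_left _ _
  have htM' : t⁻¹ ≤ M := le_max_right _ _
  -- a uniform geometric bound `r`
  obtain ⟨r, hr0, hr1, hrb⟩ : ∃ r : ℝ, 0 ≤ r ∧ r < 1 ∧ ∀ i, q ^ 2 * M * |z i| ≤ r := by
    have htend : Tendsto (fun i : ℤ => q ^ 2 * M * |z i|) cofinite (nhds 0) := by
      have h2 := hz.tendsto_cofinite_zero.const_mul (q ^ 2 * M)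
      simpa using h2
    have hev : ∀ᶠ i in cofinite, q ^ 2 * M * |z i| < 1 / 2 :=
      htend.eventually_lt_const (by norm_num)
    have hfin : {i : ℤ | ¬ q ^ 2 * M * |z i| < 1 / 2}.Finite :=
      Filter.eventually_cofinite.mp hev
    set s : Finset ℝ := insert (1 / 2 : ℝ) (hfin.toFinset.image fun i => q ^ 2 * M * |z i|)
      with hs
    have hne : s.Nonempty := ⟨1 / 2, Finset.mem_insert_self _ _⟩
    refine ⟨s.max' hne, le_trans (by norm_num) (Finset.le_max' s (1 / 2)
      (Finset.mem_insert_self _ _)), ?_, ?_⟩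
    · have hmem := s.max'_mem hne
      rcases Finset.mem_insert.mp hmem with h | h
      · rw [h]; norm_num
      · obtain ⟨i, _, hi⟩ := Finset.mem_image.mp h
        rw [← hi]; exact hzq i
    · intro i
      by_cases hcase : q ^ 2 * M * |z i| < 1 / 2
      · exact le_trans hcase.le (Finset.le_max' s _ (Finset.mem_insert_self _ _))
      · exact Finset.le_max' s _ (Finset.mem_insert.mpr (Or.inr
          (Finset.mem_image.mpr ⟨i, hfin.mem_toFinset.mpr hcase, rfl⟩)))
  -- basic bounds
  have habs : ∀ (m : ℕ+) (i : ℤ) (s : ℝ), 0 < s → s ≤ M →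
      |q ^ (2 * (m : ℕ)) * s * z i| ≤ q ^ (2 * (m : ℕ)) * M * |z i| := by
    intro m i s hs hsM
    rw [abs_mul, abs_mul, abs_of_pos (pow_pos hq0 _), abs_of_pos hs]
    have := abs_nonneg (z i)
    nlinarith [pow_pos hq0 (2 * (m : ℕ)), mul_nonneg (pow_pos hq0 (2 * (m : ℕ))).le this]
  have hqm : ∀ m : ℕ+, q ^ (2 * (m : ℕ)) ≤ q ^ 2 := by
    intro m
    exact pow_le_pow_of_le_one hq0.le hq1.le (by have := m.pos; omega)
  have hcr : ∀ (m : ℕ+) (i : ℤ), q ^ (2 * (m : ℕ)) * M * |z i| ≤ r := by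
    intro m i
    refine le_trans ?_ (hrb i)
    exact mul_le_mul_of_nonneg_right (mul_le_mul_of_nonneg_right (hqm m) hM0.le) (abs_nonneg _)
  have hAr : ∀ (m : ℕ+) (i : ℤ), |q ^ (2 * (m : ℕ)) * t * z i| ≤ r :=
    fun m i => le_trans (habs m i t ht htM) (hcr m i)
  have hBr : ∀ (m : ℕ+) (i : ℤ), |q ^ (2 * (m : ℕ)) * t⁻¹ * z i| ≤ r :=
    fun m i => le_trans (habs m i t⁻¹ (inv_pos.mpr ht) htM') (hcr m i)
  have hA1 : ∀ (m : ℕ+) (i : ℤ), |q ^ (2 * (m : ℕ)) * t * z i| < 1 :=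
    fun m i => lt_of_le_of_lt (hAr m i) hr1
  have hB1 : ∀ (m : ℕ+) (i : ℤ), |q ^ (2 * (m : ℕ)) * t⁻¹ * z i| < 1 :=
    fun m i => lt_of_le_of_lt (hBr m i) hr1
  -- the triple-index log-series family
  set g : (ℕ+ × ℤ) × ℕ → ℝ := fun x =>
    ((x.1.1 : ℕ) : ℝ) * ((2 : ℝ) * (1 / (2 * (x.2 : ℝ) + 1)) *
      ((q ^ (2 * (x.1.1 : ℕ)) * t * z x.1.2) ^ (2 * x.2 + 1) -
        (q ^ (2 * (x.1.1 : ℕ)) * t⁻¹ * z x.1.2) ^ (2 * x.2 + 1))) with hgdef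
  -- summability of g
  have hu : Summable (fun m : ℕ+ => ((m : ℕ) : ℝ) * q ^ (2 * (m : ℕ))) := by
    have h := (aux_pnat_geom (x := q ^ 2)
      (by rw [abs_of_pos (pow_pos hq0 2)]; exact pow_lt_one₀ hq0.le hq1 two_ne_zero)).summable
    refine h.congr fun m => ?_
    rw [← pow_mul]
  have hv : Summable (fun i : ℤ => (4 * M) * |z i|) := hz.mul_left _
  have huv : Summable (fun p : ℕ+ × ℤ =>
      (((p.1 : ℕ) : ℝ) * q ^ (2 * (p.1 : ℕ))) * ((4 * M) * |z p.2|)) :=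
    hu.mul_of_nonneg hv (fun m => by positivity) (fun i => by positivity)
  have hw : Summable (fun n : ℕ => (r ^ 2) ^ n) :=
    summable_geometric_of_lt_one (by positivity) (by nlinarith)
  have hh : Summable (fun x : (ℕ+ × ℤ) × ℕ =>
      ((((x.1.1 : ℕ) : ℝ) * q ^ (2 * (x.1.1 : ℕ))) * ((4 * M) * |z x.1.2|)) * (r ^ 2) ^ x.2) :=
    huv.mul_of_nonneg hw (fun p => by positivity) (fun n => by positivity)
  have hg : Summable g := by
    refine Summable.of_norm_bounded hh ?_
    rintro ⟨⟨m, i⟩, n⟩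
    set a : ℝ := q ^ (2 * (m : ℕ)) * t * z i with hadef
    set b : ℝ := q ^ (2 * (m : ℕ)) * t⁻¹ * z i with hbdef
    set c : ℝ := q ^ (2 * (m : ℕ)) * M * |z i| with hcdef
    have hc0 : 0 ≤ c := by positivity
    have hac : |a| ≤ c := habs m i t ht htM
    have hbc : |b| ≤ c := habs m i t⁻¹ (inv_pos.mpr ht) htM'
    have hcrr : c ≤ r := hcr m i
    have hdiff : |a ^ (2 * n + 1) - b ^ (2 * n + 1)| ≤ 2 * c ^ (2 * n + 1) := by
      calc |a ^ (2 * n + 1) - b ^ (2 * n + 1)| ≤ |a ^ (2 * n + 1)| + |b ^ (2 * n + 1)| :=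
            abs_sub _ _
        _ = |a| ^ (2 * n + 1) + |b| ^ (2 * n + 1) := by rw [abs_pow, abs_pow]
        _ ≤ c ^ (2 * n + 1) + c ^ (2 * n + 1) :=
            add_le_add (pow_le_pow_left₀ (abs_nonneg _) hac _)
              (pow_le_pow_left₀ (abs_nonneg _) hbc _)
        _ = 2 * c ^ (2 * n + 1) := by ring
    have hck : c ^ (2 * n + 1) ≤ c * (r ^ 2) ^ n := by
      have h1 : c ^ (2 * n + 1) = c * (c ^ 2) ^ n := by
        rw [← pow_mul, pow_succ, mul_comm]
      have h2 : c ^ 2 ≤ r ^ 2 := pow_le_pow_left₀ hc0 hcrr 2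
      have h3 : (c ^ 2) ^ n ≤ (r ^ 2) ^ n := pow_le_pow_left₀ (by positivity) h2 n
      rw [h1]
      exact mul_le_mul_of_nonneg_left h3 hc0
    have hcoef : (2 : ℝ) * (1 / (2 * (n : ℝ) + 1)) ≤ 2 := by
      have h1 : (1 : ℝ) ≤ 2 * (n : ℝ) + 1 := by
        have := Nat.cast_nonneg (α := ℝ) n
        linarith
      have h2 : 1 / (2 * (n : ℝ) + 1) ≤ 1 := by
        rw [div_le_one (by positivity)]; exact h1
      linarith
    have hcoef0 : (0 : ℝ) ≤ (2 : ℝ) * (1 / (2 * (n : ℝ) + 1)) := by positivity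
    have hgx : g ((m, i), n) = ((m : ℕ) : ℝ) * ((2 : ℝ) * (1 / (2 * (n : ℝ) + 1)) *
        (a ^ (2 * n + 1) - b ^ (2 * n + 1))) := rfl
    rw [Real.norm_eq_abs, hgx, abs_mul, abs_mul]
    rw [abs_of_nonneg (by positivity : (0:ℝ) ≤ ((m : ℕ) : ℝ)), abs_of_nonneg hcoef0]
    calc ((m : ℕ) : ℝ) * ((2 : ℝ) * (1 / (2 * (n : ℝ) + 1)) *
          |a ^ (2 * n + 1) - b ^ (2 * n + 1)|)
        ≤ ((m : ℕ) : ℝ) * (2 * (2 * c ^ (2 * n + 1))) := by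
          refine mul_le_mul_of_nonneg_left ?_ (by positivity)
          exact mul_le_mul hcoef hdiff (abs_nonneg _) (by norm_num)
      _ ≤ ((m : ℕ) : ℝ) * (2 * (2 * (c * (r ^ 2) ^ n))) := by
          refine mul_le_mul_of_nonneg_left ?_ (by positivity)
          nlinarith
      _ = ((((m : ℕ) : ℝ) * q ^ (2 * (m : ℕ))) * ((4 * M) * |z i|)) * (r ^ 2) ^ n := by
          rw [hcdef]; ring
  -- fiberwise sums: over n, for each (m,i)
  set L : ℕ+ × ℤ → ℝ := fun p => ((p.1 : ℕ) : ℝ) * Real.log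
    ((((1 + q ^ (2 * (p.1 : ℕ)) * t * z p.2) * (1 - q ^ (2 * (p.1 : ℕ)) * t⁻¹ * z p.2))) /
      ((1 - q ^ (2 * (p.1 : ℕ)) * t * z p.2) * (1 + q ^ (2 * (p.1 : ℕ)) * t⁻¹ * z p.2)))
    with hLdef
  have hfiber : ∀ p : ℕ+ × ℤ, HasSum (fun n => g (p, n)) (L p) := by
    rintro ⟨m, i⟩
    exact (aux_log4 (hA1 m i) (hB1 m i)).mul_left _
  set S : ℝ := ∑' x, g x with hSdef
  have hLsum : HasSum L S := hg.hasSum.prod_fiberwise hfiber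
  -- positivity of the factors
  have hFpos : ∀ p : ℕ+ × ℤ,
      0 < (((1 + q ^ (2 * (p.1 : ℕ)) * t * z p.2) * (1 - q ^ (2 * (p.1 : ℕ)) * t⁻¹ * z p.2)) /
        ((1 - q ^ (2 * (p.1 : ℕ)) * t * z p.2) * (1 + q ^ (2 * (p.1 : ℕ)) * t⁻¹ * z p.2))) := by
    rintro ⟨m, i⟩
    obtain ⟨ha1, ha2⟩ := abs_lt.mp (hA1 m i)
    obtain ⟨hb1, hb2⟩ := abs_lt.mp (hB1 m i)
    exact div_pos (mul_pos (by linarith) (by linarith)) (mul_pos (by linarith) (by linarith))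
  have hexp : HasProd (fun p : ℕ+ × ℤ =>
      (((1 + q ^ (2 * (p.1 : ℕ)) * t * z p.2) * (1 - q ^ (2 * (p.1 : ℕ)) * t⁻¹ * z p.2)) /
        ((1 - q ^ (2 * (p.1 : ℕ)) * t * z p.2) * (1 + q ^ (2 * (p.1 : ℕ)) * t⁻¹ * z p.2)))
        ^ (p.1 : ℕ)) (Real.exp S) := by
    have h := hLsum.rexp
    have heq : rexp ∘ L = fun p : ℕ+ × ℤ =>
        (((1 + q ^ (2 * (p.1 : ℕ)) * t * z p.2) * (1 - q ^ (2 * (p.1 : ℕ)) * t⁻¹ * z p.2)) /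
          ((1 - q ^ (2 * (p.1 : ℕ)) * t * z p.2) * (1 + q ^ (2 * (p.1 : ℕ)) * t⁻¹ * z p.2)))
          ^ (p.1 : ℕ) := by
      funext p
      show Real.exp (L p) = _
      simp only [hLdef]
      rw [Real.exp_nat_mul, Real.exp_log (hFpos p)]
    rwa [heq] at h
  -- compute S
  have hSval : S = ∑' k : {k : ℕ // Odd k},
      (2 / ((k : ℕ) : ℝ)) *
        ((t ^ (k : ℕ) - t⁻¹ ^ (k : ℕ)) / (q ^ (k : ℕ) - q⁻¹ ^ (k : ℕ)) ^ 2) *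
        (∑' i : ℤ, z i ^ (k : ℕ)) := by
    set f : {k : ℕ // Odd k} → ℝ := fun k =>
      (2 / ((k : ℕ) : ℝ)) *
        ((t ^ (k : ℕ) - t⁻¹ ^ (k : ℕ)) / (q ^ (k : ℕ) - q⁻¹ ^ (k : ℕ)) ^ 2) *
        (∑' i : ℤ, z i ^ (k : ℕ)) with hfdef
    have hg' : Summable (fun y : ℕ × (ℕ+ × ℤ) => g (y.2, y.1)) := by
      have := (Equiv.summable_iff (Equiv.prodComm ℕ (ℕ+ × ℤ)) (f := g)).mpr hg
      exact this
    have hswap : S = ∑' n : ℕ, ∑' p : ℕ+ × ℤ, g (p, n) := by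
      rw [hSdef, ← (Equiv.prodComm ℕ (ℕ+ × ℤ)).tsum_eq g]
      exact Summable.tsum_prod' hg' fun n => hg'.prod_factor n
    have hinner : ∀ n : ℕ, ∑' p : ℕ+ × ℤ, g (p, n) = f (oddEquiv n) := by
      intro n
      have hfn : Summable (fun p : ℕ+ × ℤ => g (p, n)) := hg'.prod_factor n
      set k : ℕ := 2 * n + 1 with hkdef
      set C : ℝ := 2 * (1 / (2 * (n : ℝ) + 1)) * (t ^ k - t⁻¹ ^ k) with hCdef
      set Qk : ℝ := q ^ (2 * k) with hQkdef
      have hQk1 : |Qk| < 1 := by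
        rw [hQkdef, abs_of_pos (pow_pos hq0 _)]
        exact pow_lt_one₀ hq0.le hq1 (by omega)
      have hterm : ∀ (m : ℕ+) (i : ℤ),
          g ((m, i), n) = (C * (((m : ℕ) : ℝ) * Qk ^ (m : ℕ))) * z i ^ k := by
        intro m i
        rw [hgdef]
        show ((m : ℕ) : ℝ) * ((2 : ℝ) * (1 / (2 * (n : ℝ) + 1)) *
          ((q ^ (2 * (m : ℕ)) * t * z i) ^ (2 * n + 1) -
            (q ^ (2 * (m : ℕ)) * t⁻¹ * z i) ^ (2 * n + 1))) = _
        have e1 : (q ^ (2 * (m : ℕ)) * t * z i) ^ (2 * n + 1) =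
            (q ^ (2 * (m : ℕ))) ^ (2 * n + 1) * t ^ (2 * n + 1) * z i ^ (2 * n + 1) := by
          rw [mul_pow, mul_pow]
        have e2 : (q ^ (2 * (m : ℕ)) * t⁻¹ * z i) ^ (2 * n + 1) =
            (q ^ (2 * (m : ℕ))) ^ (2 * n + 1) * t⁻¹ ^ (2 * n + 1) * z i ^ (2 * n + 1) := by
          rw [mul_pow, mul_pow]
        have e3 : (q ^ (2 * (m : ℕ))) ^ (2 * n + 1) = Qk ^ (m : ℕ) := by
          rw [hQkdef, ← pow_mul, ← pow_mul, hkdef]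
          congr 1
          ring
        rw [e1, e2, e3, hCdef, hkdef]
        ring
      have hstep : ∑' p : ℕ+ × ℤ, g (p, n) =
          (C * ∑' i : ℤ, z i ^ k) * (Qk / (1 - Qk) ^ 2) := by
        rw [Summable.tsum_prod' hfn fun m => hfn.prod_factor m]
        calc ∑' (m : ℕ+) (i : ℤ), g ((m, i), n)
            = ∑' (m : ℕ+), (C * (((m : ℕ) : ℝ) * Qk ^ (m : ℕ))) * ∑' i : ℤ, z i ^ k := by
              refine tsum_congr fun m => ?_
              rw [← tsum_mul_left]
              exact tsum_congr fun i => hterm m i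
          _ = ∑' (m : ℕ+), (C * ∑' i : ℤ, z i ^ k) * (((m : ℕ) : ℝ) * Qk ^ (m : ℕ)) := by
              exact tsum_congr fun m => by ring
          _ = (C * ∑' i : ℤ, z i ^ k) * ∑' (m : ℕ+), ((m : ℕ) : ℝ) * Qk ^ (m : ℕ) :=
              tsum_mul_left
          _ = (C * ∑' i : ℤ, z i ^ k) * (Qk / (1 - Qk) ^ 2) := by
              rw [(aux_pnat_geom hQk1).tsum_eq]
      rw [hstep]
      -- arithmetic identity
      have hqk0 : q ^ k ≠ 0 := (pow_pos hq0 _).ne'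
      have hQlt : Qk < 1 := by
        rw [hQkdef]; exact pow_lt_one₀ hq0.le hq1 (by omega)
      have hQpos : 0 < Qk := by rw [hQkdef]; exact pow_pos hq0 _
      have hQne : (1 : ℝ) - Qk ≠ 0 := by linarith
      have hQsq : Qk = (q ^ k) ^ 2 := by rw [hQkdef, ← pow_mul]; congr 1; ring
      have hD : q ^ k - q⁻¹ ^ k = (Qk - 1) / q ^ k := by
        rw [inv_pow, hQsq]
        field_simp
      have hkey : Qk / (1 - Qk) ^ 2 = 1 / (q ^ k - q⁻¹ ^ k) ^ 2 := by
        have ha : (1 : ℝ) - (q ^ k) ^ 2 ≠ 0 := by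
          rw [← hQsq]; exact (by linarith : (0:ℝ) < 1 - Qk).ne'
        have hb2 : ((q : ℝ) ^ k) ^ 2 - 1 ≠ 0 := by
          rw [← hQsq]; exact (by linarith : Qk - 1 < 0).ne
        rw [hD, div_pow, hQsq]
        rw [one_div, inv_div]
        rw [div_eq_div_iff (pow_ne_zero 2 ha) (pow_ne_zero 2 hb2)]
        ring
      have hcoe : (oddEquiv n : ℕ) = k := rfl
      rw [hfdef]
      show (C * ∑' i : ℤ, z i ^ k) * (Qk / (1 - Qk) ^ 2) =
        (2 / ((oddEquiv n : ℕ) : ℝ)) *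
          ((t ^ (oddEquiv n : ℕ) - t⁻¹ ^ (oddEquiv n : ℕ)) /
            (q ^ (oddEquiv n : ℕ) - q⁻¹ ^ (oddEquiv n : ℕ)) ^ 2) *
          (∑' i : ℤ, z i ^ (oddEquiv n : ℕ))
      have hco2 : ((k : ℕ) : ℝ) = 2 * (n : ℝ) + 1 := by
        rw [hkdef]; push_cast; ring
      rw [hcoe, hkey, hCdef, hco2]
      ring
    calc S = ∑' n : ℕ, ∑' p : ℕ+ × ℤ, g (p, n) := hswap
      _ = ∑' n : ℕ, f (oddEquiv n) := tsum_congr hinner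
      _ = ∑' k : {k : ℕ // Odd k}, f k := oddEquiv.tsum_eq f
  rw [← hSval]
  exact ⟨hexp.multipliable, hexp.tprod_eq⟩
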